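/- arXiv:1806.02115 — 8 statements merged into one kernel-verified Lean document; each statement's English description precedes it below -/
import Mathlib

section
/- If G is a nonabelian finite group with an abelian subgroup A and commuting subsets A₁ of G such that G = A ⊎ A₁ (disjoint union), then a contradiction arises; i.e., no nonabelian group admits a 1-abelian partition. -/
/-- No nonabelian finite group admits a 1-abelian partition: if `G` is the disjoint
union of an abelian subgroup `A` and a single commuting subset `A₁` with `|A₁| > 1`,
a contradiction arises. -/
theorem no_one_abelian_partition {G : Type*} [Group G] [Finite G]
    (hG : ¬ ∀ a b : G, a * b = b * a)
    (A : Subgroup G) (hA : ∀ a ∈ A, ∀ b ∈ A, a * b = b * a)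
    (A₁ : Set G) (hA₁ : ∀ a ∈ A₁, ∀ b ∈ A₁, a * b = b * a)
    (hcard : 1 < A₁.ncard)
    (hdisj : Disjoint (A : Set G) A₁)
    (hunion : (A : Set G) ∪ A₁ = Set.univ) : False := by
  apply hG
  have key : ∀ b ∈ A₁, ∀ g : G, b * g = g * b := by
    intro b hb g
    have hg : g ∈ (A : Set G) ∪ A₁ := hunion ▸ Set.mem_univ g
    rcases hg with hgA | hgA₁
    · have h1 : g * b ∈ A₁ := by
        have hm : g * b ∈ (A : Set G) ∪ A₁ := hunion ▸ Set.mem_univ (g * b)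
        rcases hm with h | h
        · exfalso
          have hbA : b ∈ A := by
            have := mul_mem (inv_mem hgA) h
            simpa [mul_assoc] using this
          exact Set.disjoint_left.mp hdisj hbA hb
        · exact h
      have := hA₁ b hb (g * b) h1
      have h2 : b * g * b = g * b * b := by
        simpa [mul_assoc] using this
      exact mul_right_cancel h2
    · exact hA₁ b hb g hgA₁
  intro x y
  have hx : x ∈ (A : Set G) ∪ A₁ := hunion ▸ Set.mem_univ x
  rcases hx with hxA | hxA₁
  · have hy : y ∈ (A : Set G) ∪ A₁ := hunion ▸ Set.mem_univ y
    rcases hy with hyA | hyA₁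
    · exact hA x hxA y hyA
    · exact (key y hyA₁ x).symm
  · exact key x hxA₁ y
end

section
/- Let G be a finite group and let {g₁, ..., gₘ} be a noncommuting subset of G of maximum cardinality. Then the intersection ⋂ᵢ C_G(gᵢ) of the centralizers of the gᵢ is an abelian subgroup of G. -/
/-- If `s` is a noncommuting subset of a finite group `G` of maximum cardinality,
then the intersection of the centralizers of its elements is an abelian subgroup. -/
theorem centralizer_inter_of_max_noncommuting_is_abelian {G : Type*} [Group G] [Finite G]
    (s : Finset G)
    (hnc : ∀ a ∈ s, ∀ b ∈ s, a ≠ b → a * b ≠ b * a)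
    (hmax : ∀ t : Finset G, (∀ a ∈ t, ∀ b ∈ t, a ≠ b → a * b ≠ b * a) → t.card ≤ s.card) :
    ∀ a ∈ Subgroup.centralizer (s : Set G), ∀ b ∈ Subgroup.centralizer (s : Set G),
      a * b = b * a := by
  classical
  intro a ha b hb
  rw [Subgroup.mem_centralizer_iff] at ha hb
  by_contra hab
  by_cases hcase : ∃ g ∈ s, g * a = b
  · obtain ⟨g, hg, rfl⟩ := hcase
    exact hab (by rw [← mul_assoc, ← ha g hg, mul_assoc])
  · push_neg at hcase
    set t : Finset G := insert b (s.image (· * a)) with ht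
    have hbt : b ∉ s.image (· * a) := by
      simp only [Finset.mem_image]
      rintro ⟨g, hg, hgb⟩
      exact hcase g hg hgb
    have hinj : Set.InjOn (· * a) s := fun x _ y _ h => mul_right_cancel h
    have hcard : t.card = s.card + 1 := by
      rw [ht, Finset.card_insert_of_notMem hbt, Finset.card_image_of_injOn hinj]
    have hnt : ∀ x ∈ t, ∀ y ∈ t, x ≠ y → x * y ≠ y * x := by
      intro x hx y hy hxy
      rw [ht, Finset.mem_insert, Finset.mem_image] at hx hy
      rcases hx with hx | ⟨g, hg, rfl⟩
      · subst hx
        rcases hy with hy | ⟨h, hh, rfl⟩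
        · exact absurd hy.symm hxy
        · intro heq
          apply hab
          have hbh := hb h hh
          -- x = b, y = h * a : b * (h*a) = (h*a) * b
          have : h * (x * a) = h * (a * x) := by
            calc h * (x * a) = (h * x) * a := by rw [mul_assoc]
              _ = (x * h) * a := by rw [hbh]
              _ = x * (h * a) := by rw [mul_assoc]
              _ = (h * a) * x := heq
              _ = h * (a * x) := by rw [mul_assoc]
          exact (mul_left_cancel this).symm
      · rcases hy with hy | ⟨h, hh, rfl⟩
        · subst hy
          intro heq
          apply hab
          have hbg := hb g hg
          have : g * (a * y) = g * (y * a) := by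
            calc g * (a * y) = (g * a) * y := by rw [mul_assoc]
              _ = y * (g * a) := heq
              _ = (y * g) * a := by rw [mul_assoc]
              _ = (g * y) * a := by rw [← hbg]
              _ = g * (y * a) := by rw [mul_assoc]
          exact mul_left_cancel this
        · have hgh : g ≠ h := fun h' => hxy (by rw [h'])
          intro heq
          apply hnc g hg h hh hgh
          have : (g * h) * (a * a) = (h * g) * (a * a) := by
            calc (g * h) * (a * a) = g * ((h * a) * a) := by group
              _ = g * ((a * h) * a) := by rw [ha h hh]
              _ = (g * a) * (h * a) := by group
              _ = (h * a) * (g * a) := heq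
              _ = h * ((a * g) * a) := by group
              _ = h * ((g * a) * a) := by rw [← ha g hg]
              _ = (h * g) * (a * a) := by group
          exact mul_right_cancel this
    have := hmax t hnt
    omega
end

section
/- If a finite nonabelian group G has an n-abelian partition, then the maximum size nc(G) of a noncommuting subset of G satisfies nc(G) ≤ n + 1. -/
/-- A commuting subset of a group: all pairs of elements commute. -/
def IsCommSet {G : Type*} [Group G] (s : Set G) : Prop :=
  ∀ a ∈ s, ∀ b ∈ s, a * b = b * a

/-- `G` has an `n`-abelian partition: `G` is the disjoint union of an abelian subgroup `A`
and `n` pairwise disjoint commuting subsets, each of size `> 1`. -/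
def HasAbelianPartition (G : Type*) [Group G] (n : ℕ) : Prop :=
  ∃ (A : Subgroup G) (B : Fin n → Set G),
    (∀ a ∈ A, ∀ b ∈ A, a * b = b * a) ∧
    (∀ i, IsCommSet (B i)) ∧ (∀ i, 1 < (B i).ncard) ∧
    (∀ i, Disjoint (A : Set G) (B i)) ∧
    (Pairwise fun i j => Disjoint (B i) (B j)) ∧
    ((A : Set G) ∪ ⋃ i, B i) = Set.univ

/-- If a finite nonabelian group has an `n`-abelian partition, then any noncommuting
subset has at most `n + 1` elements, i.e. `nc(G) ≤ n + 1`. -/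
theorem noncommuting_card_le_of_abelian_partition {G : Type*} [Group G] [Finite G]
    (hG : ¬ ∀ a b : G, a * b = b * a) (n : ℕ) (hpart : HasAbelianPartition G n) :
    ∀ s : Finset G, (∀ a ∈ s, ∀ b ∈ s, a ≠ b → a * b ≠ b * a) → s.card ≤ n + 1 := by
  classical
  obtain ⟨A, B, hA, hB, _, hAB, _, hcover⟩ := hpart
  intro s hs
  -- every element is in A or some B i
  have hmem : ∀ x : G, x ∈ A ∨ ∃ i, x ∈ B i := by
    intro x
    have : x ∈ (A : Set G) ∪ ⋃ i, B i := hcover ▸ Set.mem_univ x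
    rcases this with h | h
    · exact Or.inl h
    · exact Or.inr (Set.mem_iUnion.mp h)
  set f : G → Fin (n + 1) := fun x =>
    if h : x ∈ A then Fin.last n
    else Fin.castSucc (Classical.choose ((hmem x).resolve_left h)) with hf
  have hinj : Set.InjOn f s := by
    intro x hx y hy hxy
    by_contra hne
    apply hs x hx y hy hne
    by_cases hxA : x ∈ A <;> by_cases hyA : y ∈ A
    · exact hA x hxA y hyA
    · simp only [hf, dif_pos hxA, dif_neg hyA] at hxy
      exact absurd hxy.symm (ne_of_lt (Fin.castSucc_lt_last _))
    · simp only [hf, dif_neg hxA, dif_pos hyA] at hxy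
      exact absurd hxy (ne_of_lt (Fin.castSucc_lt_last _))
    · simp only [hf, dif_neg hxA, dif_neg hyA, Fin.castSucc_inj] at hxy
      have hx' := Classical.choose_spec ((hmem x).resolve_left hxA)
      have hy' := Classical.choose_spec ((hmem y).resolve_left hyA)
      rw [hxy] at hx'
      exact hB _ x hx' y hy'
  calc s.card = (s.image f).card := (Finset.card_image_of_injOn hinj).symm
    _ ≤ (Finset.univ : Finset (Fin (n+1))).card := Finset.card_le_card (Finset.subset_univ _)
    _ = n + 1 := by simp
end

section
/- If a finite nonabelian group G has an n-abelian partition, then n ≥ ⌊|G| / k(G)⌋ − 1, where k(G) is the number of conjugacy classes of G. -/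
/-- If a finite nonabelian group `G` has an `n`-abelian partition, then
`n ≥ ⌊|G| / k(G)⌋ − 1`, where `k(G)` is the number of conjugacy classes. -/
theorem abelian_partition_lower_bound {G : Type*} [Group G] [Finite G]
    (hG : ¬ ∀ a b : G, a * b = b * a) (n : ℕ) (hpart : HasAbelianPartition G n) :
    Nat.card G / Nat.card (ConjClasses G) - 1 ≤ n := by
  classical
  haveI := Fintype.ofFinite G
  obtain ⟨A, B, hA, hB, -, hAB, hBB, hcover⟩ := hpart
  set k := Nat.card (ConjClasses G) with hk
  -- the n+1 parts as sets
  set C : Fin (n + 1) → Set G := Fin.cons (A : Set G) B with hC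
  have hCcomm : ∀ i, ∀ a ∈ C i, ∀ b ∈ C i, a * b = b * a := by
    intro i
    refine Fin.cases ?_ ?_ i
    · simpa [hC] using hA
    · intro j; simpa [hC, IsCommSet] using hB j
  have hCdisj : Pairwise (Function.onFun Disjoint C) := by
    intro i j hij
    induction i using Fin.cases with
    | zero =>
      induction j using Fin.cases with
      | zero => exact absurd rfl hij
      | succ j' => simpa [Function.onFun, hC] using hAB j'
    | succ i' =>
      induction j using Fin.cases with
      | zero => simpa [Function.onFun, hC] using (hAB i').symm
      | succ j' =>
        have hne : i' ≠ j' := by rintro rfl; exact hij rfl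
        simpa [Function.onFun, hC] using hBB hne
  have hCcover : (⋃ i, C i) = Set.univ := by
    rw [← hcover]
    ext g
    simp only [Set.mem_iUnion, Set.mem_union, hC]
    constructor
    · rintro ⟨i, hi⟩
      refine Fin.cases ?_ ?_ i hi
      · intro h; exact Or.inl h
      · intro j h; exact Or.inr ⟨j, h⟩
    · rintro (h | ⟨j, h⟩)
      · exact ⟨0, by simpa using h⟩
      · exact ⟨j.succ, by simpa using h⟩
  -- finset versions
  set c : Fin (n + 1) → Finset G := fun i => (C i).toFinset with hc
  -- commuting pairs finset
  set P : Finset (G × G) := Finset.univ.filter (fun p => Commute p.1 p.2) with hP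
  have hPcard : P.card = k * Nat.card G := by
    rw [hP, ← Fintype.card_subtype, ← Nat.card_eq_fintype_card]
    exact card_comm_eq_card_conjClasses_mul_card G
  -- the products c i ×ˢ c i are disjoint subsets of P
  have hsub : (Finset.univ.biUnion fun i => c i ×ˢ c i) ⊆ P := by
    intro p hp
    simp only [Finset.mem_biUnion, Finset.mem_product] at hp
    obtain ⟨i, -, h1, h2⟩ := hp
    simp only [hc, Set.mem_toFinset] at h1 h2
    simp only [hP, Finset.mem_filter, Finset.mem_univ, true_and]
    exact hCcomm i p.1 h1 p.2 h2
  have hdisjP : ∀ i ∈ (Finset.univ : Finset (Fin (n+1))), ∀ j ∈ (Finset.univ : Finset (Fin (n+1))),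
      i ≠ j → Disjoint (c i ×ˢ c i) (c j ×ˢ c j) := by
    intro i _ j _ hij
    rw [Finset.disjoint_left]
    intro p hp hp'
    simp only [Finset.mem_product, hc, Set.mem_toFinset] at hp hp'
    exact (hCdisj hij).le_bot ⟨hp.1, hp'.1⟩
  have hsum2 : ∑ i, (c i).card ^ 2 ≤ k * Nat.card G := by
    calc ∑ i, (c i).card ^ 2
        = ∑ i, (c i ×ˢ c i).card := by
          simp [Finset.card_product, sq]
      _ = (Finset.univ.biUnion fun i => c i ×ˢ c i).card :=
          (Finset.card_biUnion hdisjP).symm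
      _ ≤ P.card := Finset.card_le_card hsub
      _ = k * Nat.card G := hPcard
  have hsum1 : Nat.card G ≤ ∑ i, (c i).card := by
    calc Nat.card G = (Finset.univ : Finset G).card := by
          rw [Nat.card_eq_fintype_card, Finset.card_univ]
      _ ≤ (Finset.univ.biUnion c).card := by
          apply Finset.card_le_card
          intro g _
          have : g ∈ ⋃ i, C i := hCcover ▸ Set.mem_univ g
          obtain ⟨i, hi⟩ := Set.mem_iUnion.mp this
          exact Finset.mem_biUnion.mpr ⟨i, Finset.mem_univ i, by simp [hc, hi]⟩
      _ ≤ ∑ i, (c i).card := Finset.card_biUnion_le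
  -- Cauchy-Schwarz
  have hCS : (∑ i, (c i).card) ^ 2 ≤ (n + 1) * ∑ i, (c i).card ^ 2 := by
    simpa using sq_sum_le_card_mul_sum_sq (s := (Finset.univ : Finset (Fin (n+1))))
      (f := fun i => (c i).card)
  have hmain : Nat.card G * Nat.card G ≤ ((n + 1) * k) * Nat.card G := by
    calc Nat.card G * Nat.card G ≤ (∑ i, (c i).card) ^ 2 := by
          rw [sq]; exact Nat.mul_le_mul hsum1 hsum1
      _ ≤ (n + 1) * ∑ i, (c i).card ^ 2 := hCS
      _ ≤ (n + 1) * (k * Nat.card G) := Nat.mul_le_mul_left _ hsum2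
      _ = ((n + 1) * k) * Nat.card G := by ring
  have hGpos : 0 < Nat.card G := Nat.card_pos
  have hle : Nat.card G ≤ (n + 1) * k := Nat.le_of_mul_le_mul_right hmain hGpos
  have hkpos : 0 < k := by
    rw [hk]
    exact Nat.card_pos
  have : Nat.card G / k ≤ n + 1 := by
    calc Nat.card G / k ≤ ((n + 1) * k) / k := Nat.div_le_div_right hle
      _ = n + 1 := Nat.mul_div_cancel _ hkpos
  omega
end

section
/- If a finite nonabelian group G has a 2-abelian partition with respect to an abelian subgroup A, then every conjugacy class of G has size 1 or 2; consequently G = P × Q where P is a Sylow 2-subgroup with P/Z(P) ≅ ℤ₂ × ℤ₂ and Q is abelian. -/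
open Pointwise

section Aux

variable {G : Type*} [Group G] [Finite G]

private lemma exists_not_mem_two (H K : Subgroup G) (hH : H ≠ ⊤) (hK : K ≠ ⊤) :
    ∃ g : G, g ∉ H ∧ g ∉ K := by
  obtain ⟨x, hx⟩ : ∃ x, x ∉ H := by
    by_contra h; push_neg at h; exact hH ((Subgroup.eq_top_iff' H).mpr h)
  obtain ⟨y, hy⟩ : ∃ y, y ∉ K := by
    by_contra h; push_neg at h; exact hK ((Subgroup.eq_top_iff' K).mpr h)
  by_cases hxK : x ∈ K
  · by_cases hyH : y ∈ H
    · refine ⟨x * y, fun h => hx ?_, fun h => hy ?_⟩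
      · simpa using H.mul_mem h (H.inv_mem hyH)
      · simpa using K.mul_mem (K.inv_mem hxK) h
    · exact ⟨y, hyH, hy⟩
  · exact ⟨x, hx, hxK⟩

private lemma card_le_four_mul_card_center (H₁ H₂ H₃ : Subgroup G)
    (c₁ : ∀ a ∈ H₁, ∀ b ∈ H₁, a * b = b * a)
    (c₂ : ∀ a ∈ H₂, ∀ b ∈ H₂, a * b = b * a)
    (c₃ : ∀ a ∈ H₃, ∀ b ∈ H₃, a * b = b * a)
    (p₁ : H₁ ≠ ⊤) (p₂ : H₂ ≠ ⊤) (p₃ : H₃ ≠ ⊤)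
    (cov : ∀ g : G, g ∈ H₁ ∨ g ∈ H₂ ∨ g ∈ H₃) :
    Nat.card G ≤ 4 * Nat.card (Subgroup.center G) := by
  classical
  set D := H₁ ⊓ H₂ ⊓ H₃ with hD
  have hDmem : ∀ {x : G}, x ∈ D ↔ x ∈ H₁ ∧ x ∈ H₂ ∧ x ∈ H₃ := by
    intro x; simp [hD, Subgroup.mem_inf, and_assoc]
  obtain ⟨a, ha2, ha3⟩ := exists_not_mem_two H₂ H₃ p₂ p₃
  have ha1 : a ∈ H₁ := by rcases cov a with h | h | h <;> tauto
  obtain ⟨b, hb1, hb3⟩ := exists_not_mem_two H₁ H₃ p₁ p₃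
  have hb2 : b ∈ H₂ := by rcases cov b with h | h | h <;> tauto
  obtain ⟨c, hc1, hc2⟩ := exists_not_mem_two H₁ H₂ p₁ p₂
  have hc3 : c ∈ H₃ := by rcases cov c with h | h | h <;> tauto
  have h12 : ∀ x, x ∈ H₁ → x ∈ H₂ → x ∈ H₃ := by
    intro x hx1 hx2
    by_contra hx3
    rcases cov (x * c) with h | h | h
    · exact hc1 (by simpa using H₁.mul_mem (H₁.inv_mem hx1) h)
    · exact hc2 (by simpa using H₂.mul_mem (H₂.inv_mem hx2) h)
    · exact hx3 (by simpa using H₃.mul_mem h (H₃.inv_mem hc3))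
  have h13 : ∀ x, x ∈ H₁ → x ∈ H₃ → x ∈ H₂ := by
    intro x hx1 hx3
    by_contra hx2
    rcases cov (x * b) with h | h | h
    · exact hb1 (by simpa using H₁.mul_mem (H₁.inv_mem hx1) h)
    · exact hx2 (by simpa using H₂.mul_mem h (H₂.inv_mem hb2))
    · exact hb3 (by simpa using H₃.mul_mem (H₃.inv_mem hx3) h)
  have h23 : ∀ x, x ∈ H₂ → x ∈ H₃ → x ∈ H₁ := by
    intro x hx2 hx3
    by_contra hx1
    rcases cov (x * a) with h | h | h
    · exact hx1 (by simpa using H₁.mul_mem h (H₁.inv_mem ha1))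
    · exact ha2 (by simpa using H₂.mul_mem (H₂.inv_mem hx2) h)
    · exact ha3 (by simpa using H₃.mul_mem (H₃.inv_mem hx3) h)
  -- coset claims
  have key1 : ∀ x, x ∈ H₁ → x ∉ H₂ → x ∉ H₃ → c * x ∈ H₂ := by
    intro x hx1 hx2 hx3
    rcases cov (c * x) with h | h | h
    · exact absurd (by simpa using H₁.mul_mem h (H₁.inv_mem hx1)) hc1
    · exact h
    · exact absurd (by simpa using H₃.mul_mem (H₃.inv_mem hc3) h) hx3
  have key2 : ∀ x, x ∈ H₂ → x ∉ H₁ → x ∉ H₃ → c * x ∈ H₁ := by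
    intro x hx2 hx1 hx3
    rcases cov (c * x) with h | h | h
    · exact h
    · exact absurd (by simpa using H₂.mul_mem h (H₂.inv_mem hx2)) hc2
    · exact absurd (by simpa using H₃.mul_mem (H₃.inv_mem hc3) h) hx3
  have key3 : ∀ x, x ∈ H₃ → x ∉ H₁ → x ∉ H₂ → a * x ∈ H₂ := by
    intro x hx3 hx1 hx2
    rcases cov (a * x) with h | h | h
    · exact absurd (by simpa using H₁.mul_mem (H₁.inv_mem ha1) h) hx1
    · exact h
    · exact absurd (by simpa using H₃.mul_mem h (H₃.inv_mem hx3)) ha3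
  have k1 : ∀ g, g ∈ H₁ → g ∉ H₂ → g ∉ H₃ → a⁻¹ * g ∈ D := by
    intro g hg1 hg2 hg3
    have h2 : a⁻¹ * g ∈ H₂ := by
      have := H₂.mul_mem (H₂.inv_mem (key1 a ha1 ha2 ha3)) (key1 g hg1 hg2 hg3)
      rwa [show (c * a)⁻¹ * (c * g) = a⁻¹ * g by group] at this
    have h1 : a⁻¹ * g ∈ H₁ := H₁.mul_mem (H₁.inv_mem ha1) hg1
    exact hDmem.mpr ⟨h1, h2, h12 _ h1 h2⟩
  have k2 : ∀ g, g ∈ H₂ → g ∉ H₁ → g ∉ H₃ → b⁻¹ * g ∈ D := by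
    intro g hg2 hg1 hg3
    have h1 : b⁻¹ * g ∈ H₁ := by
      have := H₁.mul_mem (H₁.inv_mem (key2 b hb2 hb1 hb3)) (key2 g hg2 hg1 hg3)
      rwa [show (c * b)⁻¹ * (c * g) = b⁻¹ * g by group] at this
    have h2 : b⁻¹ * g ∈ H₂ := H₂.mul_mem (H₂.inv_mem hb2) hg2
    exact hDmem.mpr ⟨h1, h2, h12 _ h1 h2⟩
  have k3 : ∀ g, g ∈ H₃ → g ∉ H₁ → g ∉ H₂ → c⁻¹ * g ∈ D := by
    intro g hg3 hg1 hg2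
    have h2 : c⁻¹ * g ∈ H₂ := by
      have := H₂.mul_mem (H₂.inv_mem (key3 c hc3 hc1 hc2)) (key3 g hg3 hg1 hg2)
      rwa [show (a * c)⁻¹ * (a * g) = c⁻¹ * g by group] at this
    have h3 : c⁻¹ * g ∈ H₃ := H₃.mul_mem (H₃.inv_mem hc3) hg3
    exact hDmem.mpr ⟨h23 _ h2 h3, h2, h3⟩
  -- cover by four cosets
  have cover4 : (Set.univ : Set G) ⊆
      ((D : Set G) ∪ a • (D : Set G)) ∪ (b • (D : Set G) ∪ c • (D : Set G)) := by
    intro g _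
    by_cases hg1 : g ∈ H₁ <;> by_cases hg2 : g ∈ H₂ <;> by_cases hg3 : g ∈ H₃
    · exact Or.inl (Or.inl (hDmem.mpr ⟨hg1, hg2, hg3⟩))
    · exact absurd (h12 g hg1 hg2) hg3
    · exact absurd (h13 g hg1 hg3) hg2
    · exact Or.inl (Or.inr (Set.mem_smul_set_iff_inv_smul_mem.mpr (k1 g hg1 hg2 hg3)))
    · exact absurd (h23 g hg2 hg3) hg1
    · exact Or.inr (Or.inl (Set.mem_smul_set_iff_inv_smul_mem.mpr (k2 g hg2 hg1 hg3)))
    · exact Or.inr (Or.inr (Set.mem_smul_set_iff_inv_smul_mem.mpr (k3 g hg3 hg1 hg2)))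
    · rcases cov g with h | h | h <;> tauto
  have hDZ : D ≤ Subgroup.center G := by
    intro z hz
    rw [Subgroup.mem_center_iff]
    intro g
    obtain ⟨hz1, hz2, hz3⟩ := hDmem.mp hz
    rcases cov g with h | h | h
    · exact c₁ g h z hz1
    · exact c₂ g h z hz2
    · exact c₃ g h z hz3
  have hcardD : ((D : Set G)).ncard = Nat.card D := by
    rw [← Nat.card_coe_set_eq]; rfl
  have hle : Nat.card G ≤ 4 * Nat.card D := by
    calc Nat.card G = (Set.univ : Set G).ncard := (Set.ncard_univ G).symm
      _ ≤ (((D : Set G) ∪ a • (D : Set G)) ∪ (b • (D : Set G) ∪ c • (D : Set G))).ncard :=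
          Set.ncard_le_ncard cover4 (Set.toFinite _)
      _ ≤ ((D : Set G) ∪ a • (D : Set G)).ncard + (b • (D : Set G) ∪ c • (D : Set G)).ncard :=
          Set.ncard_union_le _ _
      _ ≤ ((D : Set G).ncard + (a • (D : Set G)).ncard) +
            ((b • (D : Set G)).ncard + (c • (D : Set G)).ncard) :=
          Nat.add_le_add (Set.ncard_union_le _ _) (Set.ncard_union_le _ _)
      _ = 4 * Nat.card D := by
          rw [Set.ncard_smul_set, Set.ncard_smul_set, Set.ncard_smul_set, hcardD]; ring
  exact hle.trans (Nat.mul_le_mul_left 4 (Subgroup.card_le_of_le hDZ))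

end Aux

/-- If a finite nonabelian group `G` has a 2-abelian partition with respect to an abelian
subgroup `A`, then every conjugacy class of `G` has size 1 or 2; consequently `G = P × Q`
(internally) where `P` is a Sylow 2-subgroup with `P/Z(P) ≅ ℤ₂ × ℤ₂` and `Q` is abelian. -/
theorem two_abelian_partition_structure {G : Type*} [Group G] [Finite G]
    (hG : ¬ ∀ a b : G, a * b = b * a)
    (A : Subgroup G) (hA : ∀ a ∈ A, ∀ b ∈ A, a * b = b * a)
    (A₁ A₂ : Set G) (h1 : IsCommSet A₁) (h2 : IsCommSet A₂)
    (hc1 : 1 < A₁.ncard) (hc2 : 1 < A₂.ncard)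
    (d1 : Disjoint (A : Set G) A₁) (d2 : Disjoint (A : Set G) A₂) (d12 : Disjoint A₁ A₂)
    (hu : (A : Set G) ∪ A₁ ∪ A₂ = Set.univ) :
    (∀ g : G, Nat.card {h : G // IsConj g h} = 1 ∨ Nat.card {h : G // IsConj g h} = 2) ∧
    ∃ (P : Sylow 2 G) (Q : Subgroup G),
      (P : Subgroup G).Normal ∧ Q.Normal ∧ IsCompl (P : Subgroup G) Q ∧
      (∀ a ∈ Q, ∀ b ∈ Q, a * b = b * a) ∧
      Nonempty ((↥(P : Subgroup G) ⧸ Subgroup.center ↥(P : Subgroup G)) ≃*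
        (Multiplicative (ZMod 2) × Multiplicative (ZMod 2))) := by
  classical
  set Z := Subgroup.center G with hZdef
  -- the three abelian subgroups
  set H₂ := Subgroup.closure A₁ with hH₂
  set H₃ := Subgroup.closure A₂ with hH₃
  have c₂ : ∀ a ∈ H₂, ∀ b ∈ H₂, a * b = b * a := by
    intro x hx y hy
    have hcc := Subgroup.closure_le_centralizer_centralizer A₁
    exact Set.centralizer_centralizer_comm_of_comm h1 x (hcc hx) y (hcc hy)
  have c₃ : ∀ a ∈ H₃, ∀ b ∈ H₃, a * b = b * a := by
    intro x hx y hy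
    have hcc := Subgroup.closure_le_centralizer_centralizer A₂
    exact Set.centralizer_centralizer_comm_of_comm h2 x (hcc hx) y (hcc hy)
  have proper : ∀ H : Subgroup G, (∀ a ∈ H, ∀ b ∈ H, a * b = b * a) → H ≠ ⊤ := by
    intro H hc htop
    exact hG fun x y => hc x (htop ▸ Subgroup.mem_top x) y (htop ▸ Subgroup.mem_top y)
  have cov : ∀ g : G, g ∈ A ∨ g ∈ H₂ ∨ g ∈ H₃ := by
    intro g
    have : g ∈ (A : Set G) ∪ A₁ ∪ A₂ := hu ▸ Set.mem_univ g
    rcases this with (h | h) | h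
    · exact Or.inl h
    · exact Or.inr (Or.inl (Subgroup.subset_closure h))
    · exact Or.inr (Or.inr (Subgroup.subset_closure h))
  have hcard4 : Nat.card G ≤ 4 * Nat.card Z :=
    card_le_four_mul_card_center A H₂ H₃ hA c₂ c₃ (proper A hA) (proper H₂ c₂) (proper H₃ c₃) cov
  -- the quotient by the center has order 4
  have hnc : ¬ IsCyclic (G ⧸ Z) := by
    intro hcyc
    exact hG (commutative_of_cyclic_center_quotient (QuotientGroup.mk' Z)
      (by rw [QuotientGroup.ker_mk']))
  have hcardGZ : Nat.card G = Nat.card (G ⧸ Z) * Nat.card Z :=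
    Subgroup.card_eq_card_quotient_mul_card_subgroup Z
  have hZpos : 0 < Nat.card Z := Nat.card_pos
  have hq4 : Nat.card (G ⧸ Z) ≤ 4 := by
    by_contra h
    push_neg at h
    have h5 : 5 ≤ Nat.card (G ⧸ Z) := h
    have h5' : 5 * Nat.card Z ≤ Nat.card (G ⧸ Z) * Nat.card Z :=
      Nat.mul_le_mul_right _ h5
    rw [← hcardGZ] at h5'
    omega
  have hqpos : 0 < Nat.card (G ⧸ Z) := Nat.card_pos
  have hZ4 : Nat.card (G ⧸ Z) = 4 := by
    interval_cases h : Nat.card (G ⧸ Z)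
    · exact absurd (by
        have hs : Subsingleton (G ⧸ Z) := (Nat.card_eq_one_iff_unique.mp h).1
        exact @isCyclic_of_subsingleton _ _ hs) hnc
    · haveI : Fact (Nat.Prime 2) := ⟨Nat.prime_two⟩
      exact absurd (isCyclic_of_prime_card (p := 2) h) hnc
    · haveI : Fact (Nat.Prime 3) := ⟨Nat.prime_three⟩
      exact absurd (isCyclic_of_prime_card (p := 3) h) hnc
    · rfl
  have hexp : ∀ x : G ⧸ Z, x * x = 1 := by
    intro x
    have hdvd : orderOf x ∣ 2 ^ 2 := by
      have := hZ4 ▸ orderOf_dvd_natCard x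
      simpa using this
    have hne : orderOf x ≠ 4 := fun h =>
      hnc (isCyclic_of_orderOf_eq_card x (by rw [h, hZ4]))
    obtain ⟨i, hi, hoi⟩ := (Nat.dvd_prime_pow Nat.prime_two).mp hdvd
    have hi1 : i ≤ 1 := by
      by_contra hgt
      have hi2 : i = 2 := by omega
      exact hne (by rw [hoi, hi2]; norm_num)
    have h2 : orderOf x ∣ 2 := by
      rw [hoi]
      calc (2 : ℕ) ^ i ∣ 2 ^ 1 := pow_dvd_pow 2 hi1
        _ = 2 := pow_one 2
    calc x * x = x ^ 2 := (sq x).symm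
      _ = 1 := orderOf_dvd_iff_pow_eq_one.mp h2
  have hinv : ∀ x : G ⧸ Z, x⁻¹ = x := fun x => inv_eq_of_mul_eq_one_right (hexp x)
  have hQcomm : ∀ u v : G ⧸ Z, u * v = v * u := by
    intro u v
    calc u * v = (u * v)⁻¹ := (hinv _).symm
      _ = v⁻¹ * u⁻¹ := mul_inv_rev u v
      _ = v * u := by rw [hinv, hinv]
  have hsq : ∀ g : G, g * g ∈ Z := by
    intro g
    rw [← QuotientGroup.eq_one_iff (N := Z)]
    rw [QuotientGroup.mk_mul]
    exact hexp _
  have hcomm_center : ∀ x y : G, x⁻¹ * y⁻¹ * x * y ∈ Z := by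
    intro x y
    rw [← QuotientGroup.eq_one_iff (N := Z)]
    simp only [QuotientGroup.mk_mul, QuotientGroup.mk_inv]
    set u := (x : G ⧸ Z)
    set v := (y : G ⧸ Z)
    calc u⁻¹ * v⁻¹ * u * v = u⁻¹ * v⁻¹ * (u * v) := by group
      _ = u⁻¹ * v⁻¹ * (v * u) := by rw [hQcomm u v]
      _ = 1 := by group
  have hzc : ∀ z ∈ Z, ∀ u : G, u * z = z * u := fun z hz u =>
    Subgroup.mem_center_iff.mp hz u
  have hcomm_sq : ∀ x y : G, (x⁻¹ * y⁻¹ * x * y) * (x⁻¹ * y⁻¹ * x * y) = 1 := by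
    intro x y
    set w := x⁻¹ * y⁻¹ * x * y with hw
    have hwZ : w ∈ Z := hcomm_center x y
    have hy2 : y * y ∈ Z := hsq y
    have e2 : x⁻¹ * (y * y)⁻¹ * x * (y * y) = 1 := by
      have h := hzc _ hy2 x
      calc x⁻¹ * (y * y)⁻¹ * x * (y * y) = x⁻¹ * (y * y)⁻¹ * (x * (y * y)) := by group
        _ = x⁻¹ * (y * y)⁻¹ * ((y * y) * x) := by rw [h]
        _ = 1 := by group
    have e3 : y⁻¹ * w * y = w := by
      have h := hzc _ hwZ y
      calc y⁻¹ * w * y = y⁻¹ * (w * y) := by group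
        _ = y⁻¹ * (y * w) := by rw [← h]
        _ = w := by group
    have e : x⁻¹ * (y * y)⁻¹ * x * (y * y) = w * (y⁻¹ * w * y) := by
      rw [hw]; group
    rw [e, e3] at e2
    exact e2
  -- Part 1: conjugacy classes
  have conj_eq : ∀ g u x : G, (x : G ⧸ Z) = (u : G ⧸ Z) →
      x * g * x⁻¹ = u * g * u⁻¹ := by
    intro g u x h
    have hz : x⁻¹ * u ∈ Z := (QuotientGroup.eq).mp h
    have hc := hzc _ hz
    have key : x * (x⁻¹ * u) * g * (x * (x⁻¹ * u))⁻¹ = x * g * x⁻¹ := by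
      set z := x⁻¹ * u with hzdef
      calc x * z * g * (x * z)⁻¹ = x * (z * g) * (z⁻¹ * x⁻¹) := by group
        _ = x * (g * z) * (z⁻¹ * x⁻¹) := by rw [← hc g]
        _ = x * g * x⁻¹ := by group
    have hu : u = x * (x⁻¹ * u) := by group
    calc x * g * x⁻¹ = x * (x⁻¹ * u) * g * (x * (x⁻¹ * u))⁻¹ := key.symm
      _ = u * g * u⁻¹ := by rw [← hu]
  have part1 : ∀ g : G, Nat.card {h : G // IsConj g h} = 1 ∨
      Nat.card {h : G // IsConj g h} = 2 := by
    intro g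
    by_cases hgZ : g ∈ Z
    · left
      rw [Nat.card_eq_one_iff_unique]
      constructor
      · constructor
        intro ⟨x, hx⟩ ⟨y, hy⟩
        obtain ⟨cx, hcx⟩ := isConj_iff.mp hx
        obtain ⟨cy, hcy⟩ := isConj_iff.mp hy
        have hxg : x = g := by
          rw [← hcx, hzc _ hgZ cx]; group
        have hyg : y = g := by
          rw [← hcy, hzc _ hgZ cy]; group
        exact Subtype.ext (hxg.trans hyg.symm)
      · exact ⟨⟨g, IsConj.refl g⟩⟩
    · right
      have hnc' : ∃ t : G, ¬ (t * g = g * t) := by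
        by_contra h
        push_neg at h
        exact hgZ (Subgroup.mem_center_iff.mpr h)
      obtain ⟨t, ht⟩ := hnc'
      set k := t * g * t⁻¹ with hk
      have hkg : k ≠ g := by
        intro h
        apply ht
        have : t * g = k * t := by rw [hk]; group
        rw [this, h]
      -- the four cosets
      have ha1 : (g : G ⧸ Z) ≠ 1 := fun h => hgZ ((QuotientGroup.eq_one_iff g).mp h)
      have hb1 : (t : G ⧸ Z) ≠ 1 := by
        intro h
        have htZ : t ∈ Z := (QuotientGroup.eq_one_iff t).mp h
        exact ht (hzc t htZ g).symm
      have hba : (t : G ⧸ Z) ≠ (g : G ⧸ Z) := by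
        intro h
        have hz : t⁻¹ * g ∈ Z := (QuotientGroup.eq).mp h
        apply ht
        have hgt : g = t * (t⁻¹ * g) := by group
        calc t * g = t * (t * (t⁻¹ * g)) := by rw [← hgt]
          _ = t * ((t⁻¹ * g) * t) := by rw [← hzc _ hz t]
          _ = g * t := by group
      have hab1 : (g : G ⧸ Z) * (t : G ⧸ Z) ≠ 1 := by
        intro h
        have : ((g * t : G) : G ⧸ Z) = 1 := by rw [QuotientGroup.mk_mul]; exact h
        have hz : g * t ∈ Z := (QuotientGroup.eq_one_iff _).mp this
        apply ht
        have h1 := hzc _ hz g⁻¹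
        -- g⁻¹ * (g*t) = (g*t) * g⁻¹  gives t = g t g⁻¹, i.e. t g = g t
        have : t = g * t * g⁻¹ := by
          calc t = g⁻¹ * (g * t) := by group
            _ = (g * t) * g⁻¹ := h1
            _ = g * t * g⁻¹ := by group
        calc t * g = (g * t * g⁻¹) * g := by rw [← this]
          _ = g * t := by group
      have haba : (g : G ⧸ Z) * (t : G ⧸ Z) ≠ (g : G ⧸ Z) := by
        intro h
        exact hb1 (mul_left_cancel (a := (g : G ⧸ Z)) (by rw [mul_one]; exact h))
      have habb : (g : G ⧸ Z) * (t : G ⧸ Z) ≠ (t : G ⧸ Z) := by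
        intro h
        exact ha1 (mul_right_cancel (b := (t : G ⧸ Z)) (by rw [one_mul]; exact h))
      -- the four cosets exhaust the quotient
      have hS : ({1, (g : G ⧸ Z), (t : G ⧸ Z), (g : G ⧸ Z) * (t : G ⧸ Z)} : Set (G ⧸ Z)) =
          Set.univ := by
        apply Set.eq_of_subset_of_ncard_le (Set.subset_univ _)
        rw [Set.ncard_univ, hZ4]
        have e1 : (1 : G ⧸ Z) ∉ ({(g : G ⧸ Z), (t : G ⧸ Z), (g : G ⧸ Z) * (t : G ⧸ Z)} :
            Set (G ⧸ Z)) := by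
          simp only [Set.mem_insert_iff, Set.mem_singleton_iff, not_or]
          exact ⟨Ne.symm ha1, Ne.symm hb1, Ne.symm hab1⟩
        have e2 : (g : G ⧸ Z) ∉ ({(t : G ⧸ Z), (g : G ⧸ Z) * (t : G ⧸ Z)} : Set (G ⧸ Z)) := by
          simp only [Set.mem_insert_iff, Set.mem_singleton_iff, not_or]
          exact ⟨Ne.symm hba, Ne.symm haba⟩
        have e3 : (t : G ⧸ Z) ∉ ({(g : G ⧸ Z) * (t : G ⧸ Z)} : Set (G ⧸ Z)) := by
          simp only [Set.mem_singleton_iff]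
          exact Ne.symm habb
        rw [Set.ncard_insert_of_notMem e1, Set.ncard_insert_of_notMem e2,
          Set.ncard_insert_of_notMem e3, Set.ncard_singleton]
      have hclass : {h : G | IsConj g h} = {g, k} := by
        ext h
        simp only [Set.mem_setOf_eq, Set.mem_insert_iff, Set.mem_singleton_iff]
        constructor
        · intro hc
          obtain ⟨x, hx⟩ := isConj_iff.mp hc
          have hxmem : (x : G ⧸ Z) ∈ ({1, (g : G ⧸ Z), (t : G ⧸ Z),
              (g : G ⧸ Z) * (t : G ⧸ Z)} : Set (G ⧸ Z)) := hS ▸ Set.mem_univ _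
          rcases hxmem with h1 | h1 | h1 | h1
          · left
            rw [← hx, conj_eq g 1 x (by rw [QuotientGroup.mk_one]; exact h1)]
            group
          · left
            rw [← hx, conj_eq g g x h1]
            group
          · right
            rw [← hx, conj_eq g t x h1]
          · right
            rw [← hx, conj_eq g (g * t) x (by rw [QuotientGroup.mk_mul]; exact h1)]
            -- (g*t) * g * (g*t)⁻¹ = k
            have hwZ : g⁻¹ * t * g * t⁻¹ ∈ Z := by
              have := hcomm_center g t⁻¹
              simpa using this
            have hkw : k = g * (g⁻¹ * t * g * t⁻¹) := by rw [hk]; group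
            have hcw := hzc _ hwZ g⁻¹
            calc (g * t) * g * (g * t)⁻¹
                = g * (g * (g⁻¹ * t * g * t⁻¹)) * g⁻¹ := by group
              _ = g * g * ((g⁻¹ * t * g * t⁻¹) * g⁻¹) := by group
              _ = g * g * (g⁻¹ * (g⁻¹ * t * g * t⁻¹)) := by rw [← hcw]
              _ = g * (g⁻¹ * t * g * t⁻¹) := by group
              _ = k := hkw.symm
        · intro hc
          rcases hc with h1 | h1
          · rw [h1]
          · rw [h1, hk]
            exact isConj_iff.mpr ⟨t, rfl⟩
      have : Nat.card {h : G // IsConj g h} = ({g, k} : Set G).ncard := by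
        rw [← hclass]
        exact Nat.card_coe_set_eq _
      rw [this, Set.ncard_pair (Ne.symm hkg)]
  refine ⟨part1, ?_⟩
  -- Part 2: structure
  -- odd-order elements are central
  have hodd_central : ∀ g : G, Odd (orderOf g) → g ∈ Z := by
    intro g hodd
    have h2 : (g : G ⧸ Z) * (g : G ⧸ Z) = 1 := hexp _
    have hdvd2 : orderOf (g : G ⧸ Z) ∣ 2 :=
      orderOf_dvd_of_pow_eq_one (by rw [pow_two]; exact h2)
    have hdvdo : orderOf (g : G ⧸ Z) ∣ orderOf g :=
      orderOf_dvd_of_pow_eq_one (by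
        rw [← QuotientGroup.mk_pow, pow_orderOf_eq_one, QuotientGroup.mk_one])
    have h1 : orderOf (g : G ⧸ Z) = 1 := by
      rcases (Nat.dvd_prime Nat.prime_two).mp hdvd2 with h | h
      · exact h
      · exfalso
        rw [h] at hdvdo
        rcases hodd with ⟨m, hm⟩
        omega
    exact (QuotientGroup.eq_one_iff g).mp (orderOf_eq_one_iff.mp h1)
  -- the subgroup of odd-order elements
  set Q : Subgroup G :=
    { carrier := {g : G | Odd (orderOf g)}
      one_mem' := by simp
      mul_mem' := by
        intro x y hx hy
        have hxZ : x ∈ Z := hodd_central x hx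
        have hcxy : Commute x y := (hzc _ hxZ y).symm
        have hdvd : orderOf (x * y) ∣ Nat.lcm (orderOf x) (orderOf y) :=
          hcxy.orderOf_mul_dvd_lcm
        exact Odd.of_dvd_nat (Odd.mul hx hy)
          (hdvd.trans (Nat.lcm_dvd (Dvd.intro _ rfl) (Dvd.intro_left _ rfl)))
      inv_mem' := by
        intro x hx
        simpa only [Set.mem_setOf_eq, orderOf_inv] using hx } with hQdef
  have hQmem : ∀ g : G, g ∈ Q ↔ Odd (orderOf g) := fun g => Iff.rfl
  have hQZ : ∀ g ∈ Q, g ∈ Z := fun g hg => hodd_central g ((hQmem g).mp hg)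
  -- the subgroup of 2-elements
  set P₀ : Subgroup G :=
    { carrier := {g : G | ∃ n : ℕ, g ^ 2 ^ n = 1}
      one_mem' := ⟨0, one_pow _⟩
      mul_mem' := by
        intro x y hx hy
        obtain ⟨m, hm⟩ := hx
        obtain ⟨n, hn⟩ := hy
        set w := y⁻¹ * x⁻¹ * y * x with hw
        have hwZ : w ∈ Z := hcomm_center y x
        have hw2 : w * w = 1 := hcomm_sq y x
        have hx2 : x * x ∈ Z := hsq x
        have hsq' : (x * y) * (x * y) = (x * x) * (y * y) * w := by
          have h := hzc _ hwZ y
          calc (x * y) * (x * y) = x * (y * x) * y := by group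
            _ = x * ((x * y) * w) * y := by rw [show y * x = (x * y) * w by rw [hw]; group]
            _ = (x * x) * (y * (w * y)) := by group
            _ = (x * x) * (y * (y * w)) := by rw [← h]
            _ = (x * x) * (y * y) * w := by group
        refine ⟨m + n + 2, ?_⟩
        have hkey : (x * y) ^ 2 ^ (m + n + 2) = ((x * y) * (x * y)) ^ 2 ^ (m + n + 1) := by
          rw [← pow_two, ← pow_mul, ← pow_succ']
        rw [hkey, hsq']
        have hc1 : Commute ((x * x) * (y * y)) w := hzc _ hwZ _
        have hc2 : Commute (x * x) (y * y) := (hzc _ hx2 _).symm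
        rw [hc1.mul_pow, hc2.mul_pow]
        have hxx : (x * x) ^ 2 ^ (m + n + 1) = 1 := by
          rw [← pow_two, ← pow_mul]
          apply orderOf_dvd_iff_pow_eq_one.mp
          exact dvd_trans (orderOf_dvd_of_pow_eq_one hm)
            ⟨2 ^ (n + 2), by rw [← pow_add]; ring_nf⟩
        have hyy : (y * y) ^ 2 ^ (m + n + 1) = 1 := by
          rw [← pow_two, ← pow_mul]
          apply orderOf_dvd_iff_pow_eq_one.mp
          exact dvd_trans (orderOf_dvd_of_pow_eq_one hn)
            ⟨2 ^ (m + 2), by rw [← pow_add]; ring_nf⟩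
        have hww : w ^ 2 ^ (m + n + 1) = 1 := by
          apply orderOf_dvd_iff_pow_eq_one.mp
          refine dvd_trans (orderOf_dvd_of_pow_eq_one (by rw [pow_two]; exact hw2)) ?_
          exact ⟨2 ^ (m + n), by rw [← pow_succ']⟩
        rw [hxx, hyy, hww, one_mul, one_mul]
      inv_mem' := by
        intro x hx
        obtain ⟨n, hn⟩ := hx
        exact ⟨n, by rw [inv_pow, hn, inv_one]⟩ } with hP₀def
  have hP₀mem : ∀ g : G, g ∈ P₀ ↔ ∃ n : ℕ, g ^ 2 ^ n = 1 := fun g => Iff.rfl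
  have hP₀pg : IsPGroup 2 P₀ := by
    intro ⟨g, hg⟩
    obtain ⟨n, hn⟩ := (hP₀mem g).mp hg
    exact ⟨n, Subtype.ext (by simpa using hn)⟩
  -- decomposition of an arbitrary element
  have hdecomp : ∀ g : G, ∃ u ∈ P₀, ∃ v ∈ Q, g = u * v := by
    intro g
    set n := orderOf g with hn
    have hnpos : 0 < n := orderOf_pos g
    set k := n.factorization 2 with hkdef
    set m := n / 2 ^ k with hmdef
    have hfac : 2 ^ k * m = n := Nat.ordProj_mul_ordCompl_eq_self n 2
    have hmodd : ¬ (2 ∣ m) := Nat.not_dvd_ordCompl Nat.prime_two hnpos.ne'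
    have hcop : Nat.Coprime (2 ^ k) m :=
      Nat.Coprime.pow_left k ((Nat.Prime.coprime_iff_not_dvd Nat.prime_two).mpr hmodd)
    have hbez : (1 : ℤ) = (2 : ℤ) ^ k * Nat.gcdA (2 ^ k) m + (m : ℤ) * Nat.gcdB (2 ^ k) m := by
      have h := Nat.gcd_eq_gcd_ab (2 ^ k) m
      rw [Nat.Coprime] at hcop
      rw [hcop] at h
      exact_mod_cast h
    set a' := Nat.gcdA (2 ^ k) m
    set b' := Nat.gcdB (2 ^ k) m
    have hu : g ^ m ∈ P₀ := by
      refine (hP₀mem _).mpr ⟨k, ?_⟩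
      rw [← pow_mul, mul_comm, hfac, hn]
      exact pow_orderOf_eq_one g
    have hv : g ^ (2 ^ k) ∈ Q := by
      refine (hQmem _).mpr ?_
      have hdvd : orderOf (g ^ 2 ^ k) ∣ m :=
        orderOf_dvd_of_pow_eq_one (by rw [← pow_mul, hfac, hn]; exact pow_orderOf_eq_one g)
      have hmo : Odd m := Nat.odd_iff.mpr (by omega)
      exact Odd.of_dvd_nat hmo hdvd
    refine ⟨(g ^ m) ^ b', P₀.zpow_mem hu b', (g ^ 2 ^ k) ^ a', Q.zpow_mem hv a', ?_⟩
    calc g = g ^ (1 : ℤ) := (zpow_one g).symm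
      _ = g ^ ((m : ℤ) * b' + (2 : ℤ) ^ k * a') := by
          rw [show (m : ℤ) * b' + (2 : ℤ) ^ k * a' = (2 : ℤ) ^ k * a' + (m : ℤ) * b' from by
            ring, ← hbez]
      _ = g ^ ((m : ℤ) * b') * g ^ ((2 : ℤ) ^ k * a') := zpow_add g _ _
      _ = (g ^ m) ^ b' * (g ^ 2 ^ k) ^ a' := by
          rw [zpow_mul, zpow_mul, zpow_natCast,
            show ((2 : ℤ) ^ k) = ((2 ^ k : ℕ) : ℤ) from by push_cast; ring, zpow_natCast]
  -- IsCompl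
  have hdisj : Disjoint P₀ Q := by
    rw [Subgroup.disjoint_def]
    intro x hxP hxQ
    obtain ⟨n, hn⟩ := (hP₀mem x).mp hxP
    have hdvd : orderOf x ∣ 2 ^ n := orderOf_dvd_of_pow_eq_one hn
    obtain ⟨i, hi, hoi⟩ := (Nat.dvd_prime_pow Nat.prime_two).mp hdvd
    have hodd : Odd (orderOf x) := (hQmem x).mp hxQ
    have : i = 0 := by
      by_contra h
      rcases hodd with ⟨j, hj⟩
      have : 2 ∣ 2 ^ i := dvd_pow_self 2 h
      omega
    rw [this, pow_zero] at hoi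
    exact orderOf_eq_one_iff.mp hoi
  have hcodisj : Codisjoint P₀ Q := by
    rw [codisjoint_iff_le_sup]
    intro g _
    obtain ⟨u, hu, v, hv, rfl⟩ := hdecomp g
    exact Subgroup.mul_mem _ (Subgroup.mem_sup_left hu) (Subgroup.mem_sup_right hv)
  -- Normality
  have hP₀norm : P₀.Normal := by
    constructor
    intro x hx g
    obtain ⟨n, hn⟩ := (hP₀mem x).mp hx
    exact (hP₀mem _).mpr ⟨n, by rw [conj_pow, hn, mul_one, mul_inv_cancel]⟩
  have hQnorm : Q.Normal := by
    constructor
    intro x hx g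
    have h := hzc x (hQZ x hx) g
    have : g * x * g⁻¹ = x := by rw [h]; group
    rw [this]
    exact hx
  -- the Sylow subgroup
  let P : Sylow 2 G :=
    ⟨P₀, hP₀pg, by
      intro R hR hle
      refine le_antisymm (fun x hx => ?_) hle
      obtain ⟨n, hn⟩ := hR ⟨x, hx⟩
      exact (hP₀mem x).mpr ⟨n, by simpa using congrArg Subtype.val hn⟩⟩
  -- the isomorphism P₀ ⧸ Z(P₀) ≃* G ⧸ Z
  set φ : ↥P₀ →* G ⧸ Z := (QuotientGroup.mk' Z).comp P₀.subtype with hφdef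
  have hφsurj : Function.Surjective φ := by
    intro q
    obtain ⟨g, rfl⟩ := QuotientGroup.mk'_surjective Z q
    obtain ⟨u, hu, v, hv, rfl⟩ := hdecomp g
    refine ⟨⟨u, hu⟩, ?_⟩
    show ((u : G) : G ⧸ Z) = ((u * v : G) : G ⧸ Z)
    exact (QuotientGroup.eq).mpr (by simpa using hQZ v hv)
  have hker : φ.ker = Subgroup.center ↥P₀ := by
    ext x
    rw [MonoidHom.mem_ker]
    have hφx : φ x = ((x : G) : G ⧸ Z) := rfl
    rw [hφx, QuotientGroup.eq_one_iff]
    constructor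
    · intro h
      exact Subgroup.mem_center_iff.mpr fun p => Subtype.ext (hzc _ h p.val)
    · intro h
      apply Subgroup.mem_center_iff.mpr
      intro g
      obtain ⟨u, hu, v, hv, rfl⟩ := hdecomp g
      have hux : u * (x : G) = (x : G) * u :=
        congrArg Subtype.val (Subgroup.mem_center_iff.mp h ⟨u, hu⟩)
      have hvc := hzc v (hQZ v hv)
      calc (u * v) * (x : G) = u * (v * (x : G)) := by group
        _ = u * ((x : G) * v) := by rw [hvc (x : G)]
        _ = (u * (x : G)) * v := by group
        _ = ((x : G) * u) * v := by rw [hux]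
        _ = (x : G) * (u * v) := by group
  have e1 : (↥P₀ ⧸ Subgroup.center ↥P₀) ≃* G ⧸ Z :=
    (QuotientGroup.quotientMulEquivOfEq hker.symm).trans
      (QuotientGroup.quotientKerEquivOfSurjective φ hφsurj)
  -- Klein four
  have hexpQ : Monoid.exponent (G ⧸ Z) = 2 := by
    have hdvd : Monoid.exponent (G ⧸ Z) ∣ 2 :=
      Monoid.exponent_dvd_of_forall_pow_eq_one fun g => by rw [pow_two]; exact hexp g
    have hnontriv : Nontrivial (G ⧸ Z) := by
      rcases subsingleton_or_nontrivial (G ⧸ Z) with hs | hs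
      · exfalso
        have h1 : Nat.card (G ⧸ Z) = 1 := Nat.card_eq_one_iff_unique.mpr ⟨hs, ⟨1⟩⟩
        omega
      · exact hs
    rcases (Nat.dvd_prime Nat.prime_two).mp hdvd with h | h
    · exfalso
      obtain ⟨x, y, hxy⟩ := hnontriv
      apply hxy
      have hx := Monoid.pow_exponent_eq_one x
      have hy := Monoid.pow_exponent_eq_one y
      rw [h, pow_one] at hx hy
      rw [hx, hy]
    · exact h
  haveI hKG : IsKleinFour (G ⧸ Z) := ⟨hZ4, hexpQ⟩
  haveI hKT : IsKleinFour (Multiplicative (ZMod 2) × Multiplicative (ZMod 2)) := by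
    constructor
    · rw [Nat.card_prod]
      have h2 : Nat.card (Multiplicative (ZMod 2)) = 2 := by
        rw [Nat.card_eq_fintype_card]
        simp
      rw [h2]
    · rw [Monoid.exponent_prod]
      rw [Monoid.exponent_multiplicative]
      simp
  obtain ⟨e2⟩ := IsKleinFour.nonempty_mulEquiv (G₁ := G ⧸ Z)
    (G₂ := Multiplicative (ZMod 2) × Multiplicative (ZMod 2))
  exact ⟨P, Q, hP₀norm, hQnorm, ⟨hdisj, hcodisj⟩, fun a ha b hb => hzc b (hQZ b hb) a,
    ⟨e1.trans e2⟩⟩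
end

section
/- Let G be a finite group such that G = P × Q where P is a Sylow 2-subgroup with P/Z(P) ≅ ℤ₂ × ℤ₂ and Q is abelian. Then G has a 2-abelian partition: G is the disjoint union of an abelian subgroup A of index 2 and two commuting subsets, each a coset of the center Z(G). -/
open scoped Pointwise


/-- auxiliary: in a group, if `a ^ 2 = 1` then every power of `a` is `1` or `a`. -/
lemma aux_zpow_dichotomy {H : Type*} [Group H] {a : H} (ha : a ^ 2 = 1) (n : ℤ) :
    a ^ n = 1 ∨ a ^ n = a := by
  have h2 : a ^ (2 : ℤ) = 1 := by rwa [zpow_two, ← sq]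
  have : a ^ n = a ^ (n % 2) := by
    conv_lhs => rw [← Int.emod_add_mul_ediv n 2]
    rw [zpow_add, zpow_mul, h2, one_zpow, mul_one]
  rcases Int.emod_two_eq n with h | h
  · left; rw [this, h, zpow_zero]
  · right; rw [this, h, zpow_one]

/-- auxiliary counting lemma: if `H K` are disjoint subgroups contained in `L` and every
element of `L` is a product, then `|H| * |K| = |L|`. -/
lemma aux_card_mul {G : Type*} [Group G] (H K L : Subgroup G)
    (hd : Disjoint H K) (hHL : H ≤ L) (hKL : K ≤ L)
    (hsurj : ∀ z ∈ L, ∃ h ∈ H, ∃ k ∈ K, h * k = z) :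
    Nat.card H * Nat.card K = Nat.card L := by
  have hinj := Subgroup.mul_injective_of_disjoint hd
  let f : H × K → L := fun x => ⟨(x.1 : G) * x.2, L.mul_mem (hHL x.1.2) (hKL x.2.2)⟩
  have hfinj : Function.Injective f := by
    intro x y hxy
    apply hinj
    simpa [f, Subtype.ext_iff] using hxy
  have hfsurj : Function.Surjective f := by
    rintro ⟨z, hz⟩
    obtain ⟨h, hh, k, hk, hhk⟩ := hsurj z hz
    exact ⟨(⟨h, hh⟩, ⟨k, hk⟩), Subtype.ext hhk⟩
  rw [← Nat.card_prod]
  exact Nat.card_congr (Equiv.ofBijective f ⟨hfinj, hfsurj⟩)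


/-- auxiliary: any coset of the center is a commuting set. -/
lemma aux_coset_comm {G : Type*} [Group G] (x : G) :
    IsCommSet ((· * x) '' (Subgroup.center G : Set G)) := by
  rintro a ⟨z1, hz1, rfl⟩ b ⟨z2, hz2, rfl⟩
  have hc1 : ∀ w, Commute z1 w := fun w => (Subgroup.mem_center_iff.mp hz1 w).symm
  have hc2 : ∀ w, Commute z2 w := fun w => (Subgroup.mem_center_iff.mp hz2 w).symm
  exact (Commute.mul_left (hc1 (z2 * x))
    (Commute.mul_right (hc2 x).symm (Commute.refl x))).eq

/-- If `G = P × Q` (internally) with `P` a Sylow 2-subgroup satisfying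
`P/Z(P) ≅ ℤ₂ × ℤ₂` and `Q` abelian, then `G` has a 2-abelian partition: `G` is the
disjoint union of an abelian subgroup `A` of index 2 and two commuting subsets, each a
coset of the center `Z(G)`. -/
theorem two_abelian_partition_of_structure {G : Type*} [Group G] [Finite G]
    (P : Sylow 2 G) (Q : Subgroup G)
    (hPn : (P : Subgroup G).Normal) (hQn : Q.Normal) (hcompl : IsCompl (P : Subgroup G) Q)
    (hQ : ∀ a ∈ Q, ∀ b ∈ Q, a * b = b * a)
    (hPZ : Nonempty ((↥(P : Subgroup G) ⧸ Subgroup.center ↥(P : Subgroup G)) ≃*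
      (Multiplicative (ZMod 2) × Multiplicative (ZMod 2)))) :
    ∃ (A : Subgroup G) (A₁ A₂ : Set G),
      (∀ a ∈ A, ∀ b ∈ A, a * b = b * a) ∧ A.index = 2 ∧
      (∃ g₁ : G, A₁ = (· * g₁) '' (Subgroup.center G : Set G)) ∧
      (∃ g₂ : G, A₂ = (· * g₂) '' (Subgroup.center G : Set G)) ∧
      IsCommSet A₁ ∧ IsCommSet A₂ ∧ 1 < A₁.ncard ∧ 1 < A₂.ncard ∧
      Disjoint (A : Set G) A₁ ∧ Disjoint (A : Set G) A₂ ∧ Disjoint A₁ A₂ ∧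
      (A : Set G) ∪ A₁ ∪ A₂ = Set.univ := by
  classical
  obtain ⟨φ⟩ := hPZ
  set Pg : Subgroup G := (P : Subgroup G) with hPg
  set Z : Subgroup G := Subgroup.center G with hZdef
  set ZP : Subgroup G := (Subgroup.center ↥Pg).map Pg.subtype with hZP
  have hdisj : Disjoint Pg Q := hcompl.disjoint
  have hPQ : ∀ p ∈ Pg, ∀ q ∈ Q, Commute p q := fun p hp q hq =>
    Subgroup.commute_of_normal_of_disjoint _ _ hPn hQn hdisj p q hp hq
  -- every element decomposes
  have hdecomp : ∀ g : G, ∃ p ∈ Pg, ∃ q ∈ Q, p * q = g := by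
    intro g
    have hg : g ∈ ((Pg : Set G) * (Q : Set G)) := by
      rw [← Subgroup.mul_normal, hcompl.sup_eq_top]
      trivial
    obtain ⟨p, hp, q, hq, h⟩ := hg
    exact ⟨p, hp, q, hq, h⟩
  -- Q is central
  have hQZ : Q ≤ Z := by
    intro q hq
    rw [hZdef, Subgroup.mem_center_iff]
    intro g
    obtain ⟨p, hp, q', hq', rfl⟩ := hdecomp g
    calc p * q' * q = p * (q' * q) := by rw [mul_assoc]
      _ = p * (q * q') := by rw [hQ q' hq' q hq]
      _ = p * q * q' := by rw [mul_assoc]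
      _ = q * p * q' := by rw [(hPQ p hp q hq).eq]
      _ = q * (p * q') := by rw [mul_assoc]
  -- ZP is central
  have hZPZ : ZP ≤ Z := by
    rintro x ⟨y, hy, rfl⟩
    rw [hZdef, Subgroup.mem_center_iff]
    intro g
    obtain ⟨p, hp, q', hq', rfl⟩ := hdecomp g
    have hyx : ∀ p' ∈ Pg, p' * (y : G) = (y : G) * p' := by
      intro p' hp'
      have := (Subgroup.mem_center_iff.mp hy) ⟨p', hp'⟩
      exact congrArg Subtype.val this
    have hyP : (y : G) ∈ Pg := y.2
    calc p * q' * (y : G) = p * ((y : G) * q') := by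
          rw [mul_assoc, ((hPQ (y : G) hyP q' hq').eq)]
      _ = p * (y : G) * q' := by rw [mul_assoc]
      _ = (y : G) * p * q' := by rw [← hyx p hp]
      _ = (y : G) * (p * q') := by rw [mul_assoc]
  -- central elements decompose inside ZP * Q
  have hZdecomp : ∀ z ∈ Z, ∃ a ∈ ZP, ∃ b ∈ Q, a * b = z := by
    intro z hz
    obtain ⟨p, hp, q, hq, rfl⟩ := hdecomp z
    have hpZ : (⟨p, hp⟩ : ↥Pg) ∈ Subgroup.center ↥Pg := by
      rw [Subgroup.mem_center_iff]
      rintro ⟨p', hp'⟩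
      have hz' := (Subgroup.mem_center_iff.mp hz) p'
      have h1 : p' * p * q = p * p' * q := by
        calc p' * p * q = p' * (p * q) := by rw [mul_assoc]
          _ = p * q * p' := hz'
          _ = p * (q * p') := by rw [mul_assoc]
          _ = p * (p' * q) := by rw [← (hPQ p' hp' q hq).eq]
          _ = p * p' * q := by rw [mul_assoc]
      have h2 : p' * p = p * p' := mul_right_cancel h1
      exact Subtype.ext h2
    exact ⟨p, ⟨⟨p, hp⟩, hpZ, rfl⟩, q, hq, rfl⟩
  -- squares are central
  have hsq1 : ∀ x : Multiplicative (ZMod 2) × Multiplicative (ZMod 2), x ^ 2 = 1 := by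
    decide
  have hsqP : ∀ y : ↥Pg, y ^ 2 ∈ Subgroup.center ↥Pg := by
    intro y
    have : (QuotientGroup.mk y : ↥Pg ⧸ Subgroup.center ↥Pg) ^ 2 = 1 := by
      apply φ.injective
      rw [map_pow, map_one, hsq1]
    rw [← QuotientGroup.mk_pow] at this
    exact (QuotientGroup.eq_one_iff _).mp this
  have hsq : ∀ g : G, g ^ 2 ∈ Z := by
    intro g
    obtain ⟨p, hp, q, hq, rfl⟩ := hdecomp g
    rw [(hPQ p hp q hq).mul_pow]
    apply Z.mul_mem
    · apply hZPZ
      exact ⟨(⟨p, hp⟩ : ↥Pg) ^ 2, hsqP _, rfl⟩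
    · exact hQZ (Q.pow_mem hq 2)
  -- cardinalities
  have hcardG : Nat.card Pg * Nat.card Q = Nat.card G := by
    have : Subgroup.IsComplement' Pg Q := by
      apply Subgroup.isComplement'_of_disjoint_and_mul_eq_univ hdisj
      rw [← Subgroup.mul_normal, hcompl.sup_eq_top, Subgroup.coe_top]
    exact this.card_mul
  have hcardZ : Nat.card ZP * Nat.card Q = Nat.card Z :=
    aux_card_mul ZP Q Z (hdisj.mono_left (Subgroup.map_subtype_le _)) hZPZ hQZ hZdecomp
  have hZPcard : Nat.card ZP = Nat.card (Subgroup.center ↥Pg) :=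
    (Nat.card_congr ((Subgroup.center ↥Pg).equivMapOfInjective Pg.subtype
      Pg.subtype_injective).toEquiv).symm
  have hquotcard : Nat.card (↥Pg ⧸ Subgroup.center ↥Pg) = 4 := by
    rw [Nat.card_congr φ.toEquiv]
    simp [Nat.card_prod]
  have hcardP : Nat.card Pg = 4 * Nat.card (Subgroup.center ↥Pg) := by
    rw [Subgroup.card_eq_card_quotient_mul_card_subgroup (Subgroup.center ↥Pg), hquotcard]
  have hQpos : 0 < Nat.card Q := Nat.card_pos
  have hZPpos : 0 < Nat.card (Subgroup.center ↥Pg) := Nat.card_pos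
  have hZpos : 0 < Nat.card Z := Nat.card_pos
  -- Z has index 4
  have hindex : Z.index = 4 := by
    have h1 : Z.index * Nat.card Z = Nat.card G := Z.index_mul_card
    have h2 : Z.index * Nat.card Z = 4 * Nat.card Z := by
      rw [h1, ← hcardG, hcardP, ← hcardZ, hZPcard]
      ring
    exact Nat.eq_of_mul_eq_mul_right hZpos h2
  have hquotZ : Nat.card (G ⧸ Z) = 4 := by rw [← Subgroup.index_eq_card, hindex]
  -- Z is nontrivial
  have hZbig : 1 < Nat.card Z := by
    have hPnontriv : Nontrivial ↥Pg := by
      rw [← Finite.one_lt_card_iff_nontrivial, hcardP]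
      omega
    have : Nontrivial (Subgroup.center ↥Pg) := (P.2).center_nontrivial
    have h := Finite.one_lt_card_iff_nontrivial.mpr this
    rw [← hcardZ, hZPcard]
    calc 1 < Nat.card (Subgroup.center ↥Pg) * 1 := by omega
      _ ≤ Nat.card (Subgroup.center ↥Pg) * Nat.card Q := by
          exact Nat.mul_le_mul_left _ hQpos
  -- pick t outside the center
  have hZne : Z ≠ ⊤ := by
    intro h
    rw [h, Subgroup.index_top] at hindex
    omega
  obtain ⟨t, htZ⟩ : ∃ t : G, t ∉ Z := by
    by_contra h
    push_neg at h
    exact hZne ((Subgroup.eq_top_iff' Z).mpr h)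
  set π : G →* G ⧸ Z := QuotientGroup.mk' Z with hπ
  have hπsurj : Function.Surjective π := QuotientGroup.mk'_surjective Z
  have hmk_eq_one : ∀ g : G, π g = 1 ↔ g ∈ Z := fun g => QuotientGroup.eq_one_iff g
  have htbar_sq : (π t) ^ 2 = 1 := by
    rw [← map_pow, hmk_eq_one]
    exact hsq t
  have htbar_ne : π t ≠ 1 := fun h => htZ ((hmk_eq_one t).mp h)
  -- the subgroup A
  set A : Subgroup G := (Subgroup.zpowers (π t)).comap π with hA
  have hmemA : ∀ g : G, g ∈ A ↔ π g = 1 ∨ π g = π t := by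
    intro g
    constructor
    · rintro ⟨n, hn⟩
      rw [← hn]
      exact aux_zpow_dichotomy htbar_sq n
    · rintro (h | h)
      · exact ⟨0, by simp [h]⟩
      · exact ⟨1, by simp [h]⟩
  -- A is abelian
  have hAcomm : ∀ a ∈ A, ∀ b ∈ A, a * b = b * a := by
    have key : ∀ a b : G, a ∈ Z → a * b = b * a := by
      intro a b ha
      exact ((Subgroup.mem_center_iff.mp ha) b).symm
    intro a ha b hb
    rcases (hmemA a).mp ha with h1 | h1
    · exact key a b ((hmk_eq_one a).mp h1)
    · rcases (hmemA b).mp hb with h2 | h2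
      · exact (key b a ((hmk_eq_one b).mp h2)).symm
      · have : π (a * b⁻¹) = 1 := by rw [map_mul, map_inv, h1, h2, mul_inv_cancel]
        have hc : a * b⁻¹ ∈ Z := (hmk_eq_one _).mp this
        calc a * b = (a * b⁻¹) * b * b := by group
          _ = b * (a * b⁻¹) * b := by rw [key _ b hc]
          _ = b * a := by group
    -- index of A is 2
  have horder : orderOf (π t) = 2 := by
    have hdvd : orderOf (π t) ∣ 2 := orderOf_dvd_of_pow_eq_one htbar_sq
    rcases (Nat.prime_two.eq_one_or_self_of_dvd _ hdvd) with h | h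
    · exact absurd (orderOf_eq_one_iff.mp h) htbar_ne
    · exact h
  have hcard_zt : Nat.card (Subgroup.zpowers (π t)) = 2 := by
    rw [Nat.card_zpowers, horder]
  have hAindex : A.index = 2 := by
    rw [hA, Subgroup.index_comap_of_surjective _ hπsurj]
    have h1 : (Subgroup.zpowers (π t)).index * Nat.card (Subgroup.zpowers (π t)) =
        Nat.card (G ⧸ Z) := Subgroup.index_mul_card _
    rw [hcard_zt, hquotZ] at h1
    omega
  have hAne : A ≠ ⊤ := by
    intro h
    have h2 := hAindex
    rw [h, Subgroup.index_top] at h2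
    omega
  obtain ⟨u, hu⟩ : ∃ u : G, u ∉ A := by
    by_contra h
    push_neg at h
    exact hAne ((Subgroup.eq_top_iff' A).mpr h)
  -- coset membership characterization
  have hcoset : ∀ x g : G, g ∈ ((· * x) '' (Z : Set G)) ↔ π g = π x := by
    intro x g
    constructor
    · rintro ⟨z, hz, rfl⟩
      have hz1 : π z = 1 := (hmk_eq_one z).mpr hz
      show π (z * x) = π x
      rw [map_mul, hz1, one_mul]
    · intro h
      refine ⟨g * x⁻¹, ?_, by group⟩
      have : π (g * x⁻¹) = 1 := by rw [map_mul, map_inv, h, mul_inv_cancel]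
      exact (hmk_eq_one _).mp this
  -- cardinality of cosets
  have hncard : ∀ x : G, ((· * x) '' (Z : Set G)).ncard = Nat.card Z := by
    intro x
    rw [Set.ncard_image_of_injective _ (mul_left_injective x), ← Nat.card_coe_set_eq,
      SetLike.coe_sort_coe]
  -- distinctness of the four cosets
  have d2 : π u ≠ 1 := fun h => hu ((hmemA u).mpr (Or.inl h))
  have d4 : π u ≠ π t := fun h => hu ((hmemA u).mpr (Or.inr h))
  have htinv : (π t)⁻¹ = π t := by
    apply inv_eq_of_mul_eq_one_right
    rw [← sq]
    exact htbar_sq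
  have d3 : π t * π u ≠ 1 := by
    intro h
    apply d4
    have h2 : π u = (π t)⁻¹ := eq_inv_of_mul_eq_one_right h
    rw [htinv] at h2
    exact h2
  have d5 : π t ≠ π t * π u := by
    intro h
    apply d2
    have := (left_eq_mul).mp h
    exact this
  have d6 : π u ≠ π t * π u := by
    intro h
    apply htbar_ne
    have : (1 : G ⧸ Z) * π u = π t * π u := by rw [one_mul]; exact h
    exact (mul_right_cancel this).symm
  -- the four cosets cover everything
  have hSuniv : ∀ x : G ⧸ Z, x = 1 ∨ x = π t ∨ x = π u ∨ x = π t * π u := by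
    have hS : ({1, π t, π u, π t * π u} : Set (G ⧸ Z)) = Set.univ := by
      apply Set.eq_of_subset_of_ncard_le (Set.subset_univ _) _ Set.finite_univ
      rw [Set.ncard_univ, hquotZ]
      have hcount : ({1, π t, π u, π t * π u} : Set (G ⧸ Z)).ncard = 4 := by
        rw [Set.ncard_insert_of_notMem (by simp [htbar_ne.symm, d2.symm, Ne.symm d3]),
          Set.ncard_insert_of_notMem (by simp [Ne.symm d4, d5]),
          Set.ncard_insert_of_notMem (by simp [d6]), Set.ncard_singleton]
      omega
    intro x
    have hx : x ∈ ({1, π t, π u, π t * π u} : Set (G ⧸ Z)) := hS ▸ Set.mem_univ x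
    simpa using hx
  -- assemble the answer
  refine ⟨A, (· * u) '' (Z : Set G), (· * (t * u)) '' (Z : Set G), hAcomm, hAindex,
    ⟨u, rfl⟩, ⟨t * u, rfl⟩, aux_coset_comm u, aux_coset_comm (t * u), ?_, ?_, ?_, ?_, ?_, ?_⟩
  · rw [hncard u]; exact hZbig
  · rw [hncard (t * u)]; exact hZbig
  · rw [Set.disjoint_left]
    intro g hgA hg1
    have h := (hcoset u g).mp hg1
    rcases (hmemA g).mp hgA with h1 | h1
    · exact d2 (h.symm.trans h1)
    · exact d4 (h.symm.trans h1)
  · rw [Set.disjoint_left]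
    intro g hgA hg2
    have h := (hcoset (t * u) g).mp hg2
    rw [map_mul] at h
    rcases (hmemA g).mp hgA with h1 | h1
    · exact d3 (h.symm.trans h1)
    · exact d5 (h1.symm.trans h)
  · rw [Set.disjoint_left]
    intro g hg1 hg2
    have h1 := (hcoset u g).mp hg1
    have h2 := (hcoset (t * u) g).mp hg2
    rw [map_mul] at h2
    exact d6 (h1.symm.trans h2)
  · apply Set.eq_univ_of_forall
    intro g
    rcases hSuniv (π g) with h | h | h | h
    · exact Or.inl (Or.inl ((hmemA g).mpr (Or.inl h)))
    · exact Or.inl (Or.inl ((hmemA g).mpr (Or.inr h)))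
    · exact Or.inl (Or.inr ((hcoset u g).mpr h))
    · exact Or.inr ((hcoset (t * u) g).mpr (by rw [map_mul]; exact h))
end

section
/- Let G be a finite group with center Z such that G/Z ≅ S₃ (the symmetric group on 3 letters) and |Z| ≥ 2. Then G has a 3-abelian partition: there exist x, y in G such that G = ⟨Z,x⟩ ⊎ Zy ⊎ Zyx ⊎ Zyx², where ⟨Z,x⟩ is abelian and each coset Zy, Zyx, Zyx² is a commuting subset of size > 1. -/
private def σ : Equiv.Perm (Fin 3) := Equiv.swap 0 1 * Equiv.swap 1 2
private def τ : Equiv.Perm (Fin 3) := Equiv.swap 0 1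

/-- If `G` is a finite group with center `Z` of order at least 2 and `G/Z ≅ S₃`,
then `G` has a 3-abelian partition `G = ⟨Z,x⟩ ⊎ Zy ⊎ Zyx ⊎ Zyx²`, where `⟨Z,x⟩`
is abelian and each coset `Zy`, `Zyx`, `Zyx²` is a commuting set of size > 1. -/
theorem three_abelian_partition_of_S3 {G : Type*} [Group G] [Finite G]
    (hZ : 2 ≤ Nat.card (Subgroup.center G))
    (hiso : Nonempty ((G ⧸ Subgroup.center G) ≃* Equiv.Perm (Fin 3))) :
    ∃ x y : G,
      ((fun (A B₁ B₂ B₃ : Set G) =>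
        IsCommSet A ∧ IsCommSet B₁ ∧ IsCommSet B₂ ∧ IsCommSet B₃ ∧
        1 < B₁.ncard ∧ 1 < B₂.ncard ∧ 1 < B₃.ncard ∧
        Disjoint A B₁ ∧ Disjoint A B₂ ∧ Disjoint A B₃ ∧
        Disjoint B₁ B₂ ∧ Disjoint B₁ B₃ ∧ Disjoint B₂ B₃ ∧
        A ∪ B₁ ∪ B₂ ∪ B₃ = Set.univ)
      ((Subgroup.closure (insert x (Subgroup.center G : Set G)) : Subgroup G) : Set G)
      ((· * y) '' (Subgroup.center G : Set G))
      ((· * (y * x)) '' (Subgroup.center G : Set G))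
      ((· * (y * x * x)) '' (Subgroup.center G : Set G))) := by
  classical
  obtain ⟨φ⟩ := hiso
  let e : G →* Equiv.Perm (Fin 3) := φ.toMonoidHom.comp (QuotientGroup.mk' (Subgroup.center G))
  have hesurj : Function.Surjective e :=
    φ.surjective.comp (QuotientGroup.mk'_surjective (Subgroup.center G))
  have hker : ∀ g : G, e g = 1 ↔ g ∈ Subgroup.center G := by
    intro g
    have : e g = φ ((g : G ⧸ Subgroup.center G)) := rfl
    rw [this, MulEquiv.map_eq_one_iff, QuotientGroup.eq_one_iff]
  obtain ⟨x, hx⟩ := hesurj σ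
  obtain ⟨y, hy⟩ := hesurj τ
  refine ⟨x, y, ?_⟩
  simp only []
  -- membership in cosets
  have hB : ∀ w g : G, g ∈ (· * w) '' (Subgroup.center G : Set G) ↔ e g = e w := by
    intro w g
    constructor
    · rintro ⟨z, hz, rfl⟩
      have hz1 : e z = 1 := (hker z).mpr hz
      simp [map_mul, hz1]
    · intro h
      refine ⟨g * w⁻¹, (hker _).mp ?_, by group⟩
      rw [map_mul, map_inv, h, mul_inv_cancel]
  -- membership in A
  have hA : ∀ g : G,
      g ∈ Subgroup.closure (insert x (Subgroup.center G : Set G)) ↔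
        e g = 1 ∨ e g = σ ∨ e g = σ * σ := by
    intro g
    constructor
    · intro hg
      induction hg using Subgroup.closure_induction with
      | mem a ha =>
        rcases ha with rfl | ha
        · exact Or.inr (Or.inl hx)
        · exact Or.inl ((hker a).mpr ha)
      | one => simp
      | mul a b ha hb iha ihb =>
        rcases iha with h | h | h <;> rcases ihb with h' | h' | h' <;>
          rw [map_mul, h, h'] <;> decide
      | inv a ha iha =>
        rcases iha with h | h | h <;> rw [map_inv, h] <;> decide
    · have hxm : x ∈ Subgroup.closure (insert x (Subgroup.center G : Set G)) :=
        Subgroup.subset_closure (Set.mem_insert _ _)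
      have hZm : ∀ z : G, z ∈ Subgroup.center G →
          z ∈ Subgroup.closure (insert x (Subgroup.center G : Set G)) :=
        fun z hz => Subgroup.subset_closure (Set.mem_insert_of_mem _ hz)
      rintro (h | h | h)
      · exact hZm g ((hker g).mp h)
      · have h1 : e (g * x⁻¹) = 1 := by rw [map_mul, map_inv, h, hx, mul_inv_cancel]
        have := mul_mem (hZm _ ((hker _).mp h1)) hxm
        simpa using this
      · have h1 : e (g * x⁻¹ * x⁻¹) = 1 := by
          rw [map_mul, map_mul, map_inv, h, hx]; group
        have := mul_mem (mul_mem (hZm _ ((hker _).mp h1)) hxm) hxm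
        simpa [mul_assoc] using this
  -- commuting cosets
  have hcoset : ∀ w : G, IsCommSet ((· * w) '' (Subgroup.center G : Set G)) := by
    rintro w a ⟨z1, hz1, rfl⟩ b ⟨z2, hz2, rfl⟩
    have c1 := Subgroup.mem_center_iff.mp hz1 (z2 * w)
    have c2 := Subgroup.mem_center_iff.mp hz2 w
    calc z1 * w * (z2 * w) = z1 * (z2 * w * w) := by
          rw [mul_assoc, ← mul_assoc w z2 w, c2]
      _ = z2 * w * (z1 * w) := by rw [← mul_assoc z1 (z2*w) w, ← c1, mul_assoc]
  -- A is commutative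
  have hAcomm : IsCommSet
      ((Subgroup.closure (insert x (Subgroup.center G : Set G)) : Subgroup G) : Set G) := by
    intro a ha b hb
    induction ha, hb using Subgroup.closure_induction₂ with
    | mem a b ha hb =>
      rcases ha with rfl | ha
      · rcases hb with rfl | hb
        · rfl
        · exact Subgroup.mem_center_iff.mp hb a
      · rcases hb with rfl | hb
        · exact (Subgroup.mem_center_iff.mp ha b).symm
        · exact (Subgroup.mem_center_iff.mp ha b).symm
    | one_left b hb => exact (Commute.one_left b)
    | one_right a ha => exact (Commute.one_right a)
    | mul_left a b c ha hb hc h1 h2 => exact (Commute.mul_left h1 h2)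
    | mul_right b c a hb hc ha h1 h2 => exact (Commute.mul_right h1 h2)
    | inv_left a b ha hb h => exact (Commute.inv_left h)
    | inv_right a b ha hb h => exact (Commute.inv_right h)
  -- cardinalities
  have hn : ∀ w : G, 1 < ((· * w) '' (Subgroup.center G : Set G)).ncard := by
    intro w
    rw [Set.ncard_image_of_injective _ (mul_left_injective w), ← Nat.card_coe_set_eq]
    exact hZ
  -- values of e on coset reps
  have hyx : e (y * x) = τ * σ := by rw [map_mul, hx, hy]
  have hyxx : e (y * x * x) = τ * σ * σ := by rw [map_mul, map_mul, hx, hy]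
  -- disjointness helper
  have hd : ∀ w1 w2 : G, e w1 ≠ e w2 →
      Disjoint ((· * w1) '' (Subgroup.center G : Set G))
        ((· * w2) '' (Subgroup.center G : Set G)) := by
    intro w1 w2 hne
    rw [Set.disjoint_left]
    intro g hg1 hg2
    exact hne (((hB w1 g).mp hg1).symm.trans ((hB w2 g).mp hg2))
  have hdA : ∀ w : G, (e w = 1 ∨ e w = σ ∨ e w = σ * σ) → False →
      True := fun _ _ _ => trivial
  have hdAB : ∀ w : G, ¬(e w = 1 ∨ e w = σ ∨ e w = σ * σ) →
      Disjoint ((Subgroup.closure (insert x (Subgroup.center G : Set G)) : Subgroup G) : Set G)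
        ((· * w) '' (Subgroup.center G : Set G)) := by
    intro w hne
    rw [Set.disjoint_left]
    intro g hg1 hg2
    have h1 := (hA g).mp hg1
    have h2 := (hB w g).mp hg2
    rw [h2] at h1
    exact hne h1
  have hexh : ∀ p : Equiv.Perm (Fin 3),
      p = 1 ∨ p = σ ∨ p = σ * σ ∨ p = τ ∨ p = τ * σ ∨ p = τ * σ * σ := by
    decide
  refine ⟨hAcomm, hcoset y, hcoset (y*x), hcoset (y*x*x), hn y, hn (y*x), hn (y*x*x),
    hdAB y (by rw [hy]; decide),
    hdAB (y*x) (by rw [hyx]; decide),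
    hdAB (y*x*x) (by rw [hyxx]; decide),
    hd y (y*x) (by rw [hy, hyx]; decide),
    hd y (y*x*x) (by rw [hy, hyxx]; decide),
    hd (y*x) (y*x*x) (by rw [hyx, hyxx]; decide), ?_⟩
  ext g
  simp only [Set.mem_union, Set.mem_univ, iff_true]
  rcases hexh (e g) with h | h | h | h | h | h
  · exact Or.inl (Or.inl (Or.inl ((hA g).mpr (Or.inl h))))
  · exact Or.inl (Or.inl (Or.inl ((hA g).mpr (Or.inr (Or.inl h)))))
  · exact Or.inl (Or.inl (Or.inl ((hA g).mpr (Or.inr (Or.inr h)))))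
  · exact Or.inl (Or.inl (Or.inr ((hB y g).mpr (h.trans hy.symm))))
  · exact Or.inl (Or.inr ((hB (y*x) g).mpr (h.trans hyx.symm)))
  · exact Or.inr ((hB (y*x*x) g).mpr (h.trans hyxx.symm))
end

section
/- Let G be a finite nonabelian group and H a proper subgroup such that every two distinct elements of G ∖ H fail to commute. Then H is abelian of odd order, every element of G ∖ H is an involution, and G is a Frobenius group with kernel H and complement of order 2. -/
/-- If `G` is a finite nonabelian group with a proper subgroup `H` such that no two
distinct elements of `G ∖ H` commute, then `H` is abelian of odd order, every element
outside `H` is an involution, and `G` is a Frobenius group with kernel `H` and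
complement of order 2. -/
theorem frobenius_of_noncommuting_complement {G : Type*} [Group G] [Finite G]
    (hG : ¬ ∀ a b : G, a * b = b * a)
    (H : Subgroup G) (hH : H ≠ ⊤)
    (hnc : ∀ x : G, x ∉ H → ∀ y : G, y ∉ H → x ≠ y → x * y ≠ y * x) :
    (∀ a ∈ H, ∀ b ∈ H, a * b = b * a) ∧ Odd (Nat.card H) ∧
    (∀ x : G, x ∉ H → x ≠ 1 ∧ x ^ 2 = 1) ∧
    H.Normal ∧ Nat.card G = 2 * Nat.card H ∧
    (∀ x : G, x ∉ H → ∀ h ∈ H, h ≠ 1 → x * h * x⁻¹ ≠ h) := by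
  obtain ⟨x, hx⟩ : ∃ x : G, x ∉ H := by
    by_contra h
    push_neg at h
    exact hH ((Subgroup.eq_top_iff' H).mpr h)
  -- every element outside H is an involution
  have inv1 : ∀ z : G, z ∉ H → z ≠ 1 ∧ z ^ 2 = 1 := by
    intro z hz
    have h1 : z ≠ 1 := fun h => hz (h ▸ H.one_mem)
    refine ⟨h1, ?_⟩
    by_contra hsq
    have hzinv : z⁻¹ ∉ H := fun h => hz (by simpa using H.inv_mem h)
    have hne : z ≠ z⁻¹ := by
      intro h
      exact hsq (by rw [pow_two]; nth_rewrite 2 [h]; simp)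
    exact hnc z hz z⁻¹ hzinv hne (by simp)
  -- conjugation by an element outside H inverts H
  have conj : ∀ z : G, z ∉ H → ∀ a ∈ H, z * a * z⁻¹ = a⁻¹ := by
    intro z hz a ha
    have hza : z * a ∉ H := fun h => hz (by simpa using H.mul_mem h (H.inv_mem ha))
    have h2 : (z * a) ^ 2 = 1 := (inv1 _ hza).2
    have hzinv : z⁻¹ = z := by
      have := (inv1 z hz).2
      rw [pow_two] at this
      exact inv_eq_of_mul_eq_one_left this
    rw [pow_two] at h2
    rw [hzinv]
    have : z * a * z = a⁻¹ := by
      have := congrArg (· * a⁻¹) h2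
      simpa [mul_assoc] using this
    exact this
  -- product of two elements outside H lies in H
  have prodH : ∀ y : G, y ∉ H → ∀ z : G, z ∉ H → y * z ∈ H := by
    intro y hy z hz
    by_contra hyz
    by_cases he : y = z
    · subst he
      exact hyz (by rw [← pow_two, (inv1 y hy).2]; exact H.one_mem)
    · have hy2 := (inv1 y hy).2
      have hz2 := (inv1 z hz).2
      have h2 := (inv1 _ hyz).2
      apply hnc y hy z hz he
      -- from (yz)^2 = 1, y^2 = 1, z^2 = 1 deduce yz = zy
      have hyi : y⁻¹ = y := by rw [pow_two] at hy2; exact inv_eq_of_mul_eq_one_left hy2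
      have hzi : z⁻¹ = z := by rw [pow_two] at hz2; exact inv_eq_of_mul_eq_one_left hz2
      rw [pow_two] at h2
      have : (y * z)⁻¹ = y * z := inv_eq_of_mul_eq_one_left h2
      calc y * z = (y * z)⁻¹ := this.symm
        _ = z⁻¹ * y⁻¹ := by rw [mul_inv_rev]
        _ = z * y := by rw [hyi, hzi]
  have hnorm : H.Normal := by
    constructor
    intro a ha g
    by_cases hg : g ∈ H
    · exact H.mul_mem (H.mul_mem hg ha) (H.inv_mem hg)
    · rw [conj g hg a ha]; exact H.inv_mem ha
  have habel : ∀ a ∈ H, ∀ b ∈ H, a * b = b * a := by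
    intro a ha b hb
    have h1 : x * (a * b) * x⁻¹ = (a * b)⁻¹ := conj x hx _ (H.mul_mem ha hb)
    have h2 : x * (a * b) * x⁻¹ = a⁻¹ * b⁻¹ := by
      have ha' := conj x hx a ha
      have hb' := conj x hx b hb
      calc x * (a * b) * x⁻¹ = (x * a * x⁻¹) * (x * b * x⁻¹) := by group
        _ = a⁻¹ * b⁻¹ := by rw [ha', hb']
    have : (a * b)⁻¹ = a⁻¹ * b⁻¹ := h1 ▸ h2
    rw [mul_inv_rev] at this
    have := congrArg (·⁻¹) this
    simpa [mul_inv_rev] using this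
  have hodd : Odd (Nat.card ↥H) := by
    rw [Nat.not_even_iff_odd.symm]
    intro heven
    have h2 : (2 : ℕ) ∣ Nat.card ↥H := even_iff_two_dvd.mp heven
    haveI : Fact (Nat.Prime 2) := ⟨Nat.prime_two⟩
    obtain ⟨g, hg⟩ := exists_prime_orderOf_dvd_card' (G := ↥H) 2 h2
    have hg1 : (g : G) ≠ 1 := by
      intro h
      have : g = 1 := Subtype.ext h
      rw [this] at hg; simp at hg
    have hgsq : (g : G) ^ 2 = 1 := by
      have : g ^ 2 = 1 := by rw [← hg]; exact pow_orderOf_eq_one g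
      exact_mod_cast congrArg (Subtype.val) this
    have hxg : x * (g : G) ∉ H := fun h => hx (by simpa using H.mul_mem h (H.inv_mem g.2))
    have hne : x ≠ x * g := by
      intro h
      apply hg1
      have := congrArg (x⁻¹ * ·) h
      simpa [mul_assoc] using this.symm
    apply hnc x hx (x * g) hxg hne
    have hxi : x⁻¹ = x := by
      have := (inv1 x hx).2
      rw [pow_two] at this
      exact inv_eq_of_mul_eq_one_left this
    have hgi : (g : G)⁻¹ = g := by
      rw [pow_two] at hgsq
      exact inv_eq_of_mul_eq_one_left hgsq
    have hc := conj x hx (g : G) g.2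
    rw [hxi, hgi] at hc
    calc x * (x * g) = (x * x) * g := by rw [mul_assoc]
      _ = g := by
          have := (inv1 x hx).2
          rw [pow_two] at this
          rw [this, one_mul]
      _ = x * g * x := hc.symm
  have hindex : H.index = 2 := by
    rw [Subgroup.index_eq_two_iff]
    refine ⟨x, fun b => ?_⟩
    by_cases hb : b ∈ H
    · refine Or.inr ⟨hb, fun h => hx ?_⟩
      have := H.mul_mem (H.inv_mem hb) h
      simpa [mul_assoc] using this
    · exact Or.inl ⟨prodH b hb x hx, hb⟩
  have hcard : Nat.card G = 2 * Nat.card H := by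
    rw [← hindex, ← Subgroup.card_mul_index H, mul_comm]
  refine ⟨habel, hodd, inv1, hnorm, hcard, ?_⟩
  intro z hz h hh hh1
  rw [conj z hz h hh]
  intro heq
  apply hh1
  have hsq : h ^ 2 = 1 := by
    rw [pow_two]
    nth_rewrite 1 [← heq]
    exact inv_mul_cancel h
  -- h has order dividing 2 and dividing odd card, so h = 1
  have hdvd2 : orderOf (⟨h, hh⟩ : H) ∣ 2 := orderOf_dvd_of_pow_eq_one (by
    ext; simpa using hsq)
  have hdvdcard : orderOf (⟨h, hh⟩ : H) ∣ Nat.card ↥H := orderOf_dvd_natCard _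
  rcases (Nat.dvd_prime Nat.prime_two).mp hdvd2 with h1 | h2
  · have : (⟨h, hh⟩ : H) = 1 := orderOf_eq_one_iff.mp h1
    exact congrArg Subtype.val this
  · exfalso
    rw [h2] at hdvdcard
    exact (Nat.not_even_iff_odd.symm.mp hodd) (even_iff_two_dvd.mpr hdvdcard)
end
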